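/- Let g_1, …, g_m : ℝ^n → ℝ be convex, differentiable, and (L_j, p_j)-Hölder smooth with L_j ≥ 0 and p_j ∈ [0,1]. Let λ⋆ ∈ ℝ^m with λ⋆ ≥ 0 componentwise, r ≥ 0, δ > 0, and define L_{δ,r} := Σ_{j=1}^m [((1−p_j)/(1+p_j)) · (m/δ)]^{(1−p_j)/(1+p_j)} · [(λ⋆_j + r) L_j]^{2/(1+p_j)}, with the convention that the bracketed factor equals 1 when p_j = 1; assume L_{δ,r} > 0. Then for every λ ∈ ℝ^m with 0 ≤ λ_j ≤ λ⋆_j + r for all j, and for all x, x̂ ∈ ℝ^n: Σ_{j=1}^m λ_j [g_j(x̂) − g_j(x) − ⟨∇g_j(x), x̂ − x⟩] ≥ (1/(2L_{δ,r})) ‖Σ_{j=1}^m λ_j (∇g_j(x) − ∇g_j(x̂))‖² − δ/2. -/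

import Mathlib

open scoped RealInnerProductSpace BigOperators

section Aux

variable {F : Type*} [NormedAddCommGroup F] [InnerProductSpace ℝ F] [CompleteSpace F]

lemma stmt5_line_hasDerivAt {f : F → ℝ} {G : F → F} (hf : ∀ y, HasGradientAt f (G y) y)
    (x v : F) (t : ℝ) :
    HasDerivAt (fun s : ℝ => f (x + s • v)) ⟪G (x + t • v), v⟫ t := by
  have h1 : HasDerivAt (fun s : ℝ => x + s • v) v t := by
    simpa using ((hasDerivAt_id t).smul_const v).const_add x
  have h2 := (hasGradientAt_iff_hasFDerivAt.1 (hf (x + t • v))).comp_hasDerivAt t h1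
  exact h2

/-- Subgradient inequality for convex differentiable functions. -/
lemma stmt5_convex_grad_ineq {f : F → ℝ} {G : F → F} (hconv : ConvexOn ℝ Set.univ f)
    (hf : ∀ y, HasGradientAt f (G y) y) (x z : F) :
    f x + ⟪G x, z - x⟫ ≤ f z := by
  rcases eq_or_ne z x with rfl | hne
  · simp
  set φ : ℝ → ℝ := fun s => f (x + s • (z - x)) with hφ
  have hφc : ConvexOn ℝ Set.univ φ := by
    have := hconv.comp_affineMap (AffineMap.lineMap x z : ℝ →ᵃ[ℝ] F)
    have hφeq : φ = f ∘ (AffineMap.lineMap x z : ℝ →ᵃ[ℝ] F) := by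
      ext s
      simp [φ, Function.comp, AffineMap.lineMap_apply, add_comm]
    rw [Set.preimage_univ] at this
    rw [hφeq]
    exact this
  have hd : ∀ t : ℝ, HasDerivAt φ ⟪G (x + t • (z - x)), z - x⟫ t :=
    fun t => stmt5_line_hasDerivAt hf x (z - x) t
  have h01 : (0:ℝ) < 1 := one_pos
  have := hφc.le_slope_of_hasDerivAt (Set.mem_univ 0) (Set.mem_univ 1) h01 (hd 0)
  rw [slope_def_field] at this
  simp only [φ, zero_smul, add_zero, one_smul] at this
  have hx1 : x + (z - x) = z := by abel
  rw [hx1] at this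
  have : ⟪G x, z - x⟫ ≤ f z - f x := by
    simpa [div_one] using this
  linarith

/-- Descent lemma for Hölder smooth functions. -/
lemma stmt5_holder_descent {f : F → ℝ} {G : F → F} {L p : ℝ} (hp0 : 0 ≤ p)
    (hf : ∀ y, HasGradientAt f (G y) y)
    (hHolder : ∀ a b, ‖G a - G b‖ ≤ L * ‖a - b‖ ^ p) (y z : F) :
    f z - f y - ⟪G y, z - y⟫ ≤ L / (1 + p) * ‖z - y‖ ^ (1 + p) := by
  have h1p : (0:ℝ) < 1 + p := by linarith
  set v := z - y with hv
  rcases eq_or_ne v 0 with h0 | hne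
  · have hzy : z = y := by rwa [hv, sub_eq_zero] at h0
    subst hzy
    simp [hv, Real.zero_rpow h1p.ne']
  have hvpos : (0:ℝ) < ‖v‖ := norm_pos_iff.2 hne
  set h : ℝ → ℝ := fun t => f (y + t • v) - t * ⟪G y, v⟫ - L / (1 + p) * t ^ (1 + p) * ‖v‖ ^ (1 + p)
    with hh
  have hfc : Continuous f := Differentiable.continuous (fun w => (hf w).differentiableAt)
  have hcont : Continuous h := by
    apply Continuous.sub
    · apply Continuous.sub
      · exact hfc.comp (by continuity)
      · exact continuous_id.mul continuous_const
    · exact (continuous_const.mul (continuous_id.rpow_const fun t => Or.inr h1p.le)).mul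
        continuous_const
  have hderiv : ∀ t ∈ Set.Ioo (0:ℝ) 1,
      HasDerivAt h (⟪G (y + t • v), v⟫ - ⟪G y, v⟫ - L * t ^ p * ‖v‖ ^ (1 + p)) t := by
    intro t ht
    have d1 := stmt5_line_hasDerivAt hf y v t
    have d2 : HasDerivAt (fun s : ℝ => s * ⟪G y, v⟫) ⟪G y, v⟫ t := by
      simpa using (hasDerivAt_id t).mul_const (⟪G y, v⟫ : ℝ)
    have d3 : HasDerivAt (fun s : ℝ => s ^ (1 + p)) ((1 + p) * t ^ p) t := by
      have := Real.hasDerivAt_rpow_const (p := 1 + p) (x := t) (Or.inl ht.1.ne')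
      simpa [add_sub_cancel_left] using this
    have d4 := ((d3.const_mul (L / (1 + p))).mul_const (‖v‖ ^ (1 + p)))
    have := (d1.sub d2).sub d4
    refine this.congr_deriv ?_
    field_simp
  have hanti : AntitoneOn h (Set.Icc 0 1) := by
    apply antitoneOn_of_deriv_nonpos (convex_Icc 0 1) hcont.continuousOn
    · intro t ht
      rw [interior_Icc] at ht
      exact (hderiv t ht).differentiableAt.differentiableWithinAt
    · intro t ht
      rw [interior_Icc] at ht
      rw [(hderiv t ht).deriv]
      have hb : ⟪G (y + t • v) - G y, v⟫ ≤ L * t ^ p * ‖v‖ ^ (1 + p) := by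
        calc ⟪G (y + t • v) - G y, v⟫ ≤ ‖G (y + t • v) - G y‖ * ‖v‖ :=
              real_inner_le_norm _ _
          _ ≤ (L * ‖(y + t • v) - y‖ ^ p) * ‖v‖ := by
              have := hHolder (y + t • v) y
              exact mul_le_mul_of_nonneg_right this (norm_nonneg v)
          _ = L * t ^ p * ‖v‖ ^ (1 + p) := by
              have h1 : ‖(y + t • v) - y‖ = t * ‖v‖ := by
                simp [norm_smul, abs_of_nonneg ht.1.le]
              rw [h1, Real.mul_rpow ht.1.le (norm_nonneg v),
                Real.rpow_add hvpos, Real.rpow_one]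
              ring
      rw [← inner_sub_left] at *
      linarith
  have h01 := hanti (Set.mem_Icc.2 ⟨le_refl 0, zero_le_one⟩)
    (Set.mem_Icc.2 ⟨zero_le_one, le_refl 1⟩) zero_le_one
  simp only [hh, zero_smul, add_zero, one_smul, zero_mul,
    Real.zero_rpow h1p.ne', Real.one_rpow, mul_zero, mul_one, sub_zero] at h01
  have hyz : y + v = z := by rw [hv]; abel
  rw [hyz] at h01
  linarith

lemma stmt5_key_id {A' p δ' : ℝ} (hA' : 0 < A') (hp1 : p < 1) (h1p : 0 < 1 + p) (hδ' : 0 < δ') :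
    (((1-p)/(1+p) * (1/δ')) ^ ((1-p)/(1+p)) * A' ^ (2/(1+p)) / (1+p)) ^ ((1+p)/2)
      * (δ'/(1-p)) ^ ((1-p)/2) = A' / (1+p) := by
  have hu : (0:ℝ) < 1 - p := by linarith
  have hb1 : (0:ℝ) < (1-p)/(1+p) * (1/δ') :=
    mul_pos (div_pos hu h1p) (by positivity)
  have hM : (0:ℝ) < ((1-p)/(1+p) * (1/δ')) ^ ((1-p)/(1+p)) * A' ^ (2/(1+p)) :=
    mul_pos (Real.rpow_pos_of_pos hb1 _) (Real.rpow_pos_of_pos hA' _)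
  have hL : (0:ℝ) < (((1-p)/(1+p) * (1/δ')) ^ ((1-p)/(1+p)) * A' ^ (2/(1+p)) / (1+p))
      ^ ((1+p)/2) * (δ'/(1-p)) ^ ((1-p)/2) :=
    mul_pos (Real.rpow_pos_of_pos (div_pos hM h1p) _)
      (Real.rpow_pos_of_pos (div_pos hδ' hu) _)
  apply Real.log_injOn_pos (Set.mem_Ioi.2 hL) (Set.mem_Ioi.2 (div_pos hA' h1p))
  rw [Real.log_mul (by positivity) (by positivity),
    Real.log_rpow (div_pos hM h1p), Real.log_rpow (div_pos hδ' hu),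
    Real.log_div hM.ne' h1p.ne',
    Real.log_mul (by positivity) (by positivity),
    Real.log_rpow hb1, Real.log_rpow hA',
    Real.log_div hδ'.ne' hu.ne',
    Real.log_mul (by positivity) (by positivity),
    Real.log_div hu.ne' h1p.ne',
    Real.log_div one_ne_zero hδ'.ne', Real.log_one,
    Real.log_div hA'.ne' h1p.ne']
  field_simp
  ring

lemma stmt5_young_aux {A A' p δ' t : ℝ} (hA : 0 ≤ A) (hAA' : A ≤ A') (hp0 : 0 ≤ p) (hp1 : p ≤ 1)
    (hδ' : 0 < δ') (ht : 0 ≤ t) :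
    A / (1 + p) * t ^ (1 + p) ≤
      ((1 - p) / (1 + p) * (1 / δ')) ^ ((1 - p) / (1 + p)) * A' ^ (2 / (1 + p)) / 2 * t ^ 2
        + δ' / 2 := by
  have h1p : (0:ℝ) < 1 + p := by linarith
  have hA'0 : 0 ≤ A' := hA.trans hAA'
  rcases eq_or_lt_of_le hp1 with rfl | hplt
  · -- p = 1
    norm_num
    nlinarith [sq_nonneg t, mul_le_mul_of_nonneg_right hAA' (sq_nonneg t)]
  · have hu : (0:ℝ) < 1 - p := by linarith
    rcases eq_or_lt_of_le hA'0 with hA'z | hA'pos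
    · -- A' = 0, hence A = 0
      have hAz : A = 0 := le_antisymm (hAA'.trans_eq hA'z.symm) hA
      rw [hAz, ← hA'z, Real.zero_rpow (by positivity)]
      simp only [zero_div, zero_mul, mul_zero]
      positivity
    · set M : ℝ := ((1 - p) / (1 + p) * (1 / δ')) ^ ((1 - p) / (1 + p)) * A' ^ (2 / (1 + p))
        with hMdef
      have hb1 : (0:ℝ) < (1-p)/(1+p) * (1/δ') := mul_pos (div_pos hu h1p) (by positivity)
      have hM : 0 < M := mul_pos (Real.rpow_pos_of_pos hb1 _) (Real.rpow_pos_of_pos hA'pos _)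
      have hgm := Real.geom_mean_le_arith_mean2_weighted
        (w₁ := (1+p)/2) (w₂ := (1-p)/2) (p₁ := M / (1+p) * t ^ 2) (p₂ := δ' / (1-p))
        (by positivity) (by positivity) (by positivity) (by positivity) (by ring)
      have hsplit : (M / (1+p) * t ^ 2) ^ ((1+p)/2) =
          (M / (1+p)) ^ ((1+p)/2) * t ^ (1 + p) := by
        rw [Real.mul_rpow (by positivity) (sq_nonneg t)]
        congr 1
        rw [← Real.rpow_natCast t 2, ← Real.rpow_mul ht]
        congr 1
        push_cast
        ring
      have hkey : (M / (1+p)) ^ ((1+p)/2) * (δ' / (1-p)) ^ ((1-p)/2) = A' / (1+p) :=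
        stmt5_key_id hA'pos hplt h1p hδ'
      have hleft : A / (1 + p) * t ^ (1 + p) ≤
          (M / (1+p) * t ^ 2) ^ ((1+p)/2) * (δ' / (1-p)) ^ ((1-p)/2) := by
        rw [hsplit, mul_right_comm, hkey]
        have := Real.rpow_nonneg ht (1 + p)
        apply mul_le_mul_of_nonneg_right _ this
        gcongr
      have hright : (1+p)/2 * (M / (1+p) * t ^ 2) + (1-p)/2 * (δ' / (1-p)) =
          M / 2 * t ^ 2 + δ' / 2 := by
        field_simp
      calc A / (1 + p) * t ^ (1 + p)
          ≤ (M / (1+p) * t ^ 2) ^ ((1+p)/2) * (δ' / (1-p)) ^ ((1-p)/2) := hleft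
        _ ≤ (1+p)/2 * (M / (1+p) * t ^ 2) + (1-p)/2 * (δ' / (1-p)) := hgm
        _ = M / 2 * t ^ 2 + δ' / 2 := hright

end Aux

theorem stmt5 {n m : ℕ} (g : Fin m → EuclideanSpace ℝ (Fin n) → ℝ)
    (g' : Fin m → EuclideanSpace ℝ (Fin n) → EuclideanSpace ℝ (Fin n))
    (L p : Fin m → ℝ) (hL : ∀ j, 0 ≤ L j) (hp0 : ∀ j, 0 ≤ p j) (hp1 : ∀ j, p j ≤ 1)
    (hconv : ∀ j, ConvexOn ℝ Set.univ (g j))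
    (hgrad : ∀ j x, HasGradientAt (g j) (g' j x) x)
    (hHolder : ∀ j x y, ‖g' j x - g' j y‖ ≤ L j * ‖x - y‖ ^ p j)
    (lamS : Fin m → ℝ) (hlamS : ∀ j, 0 ≤ lamS j) (r δ : ℝ) (hr : 0 ≤ r) (hδ : 0 < δ)
    (hpos : 0 < ∑ j, ((1 - p j) / (1 + p j) * ((m : ℝ) / δ)) ^ ((1 - p j) / (1 + p j)) *
      ((lamS j + r) * L j) ^ (2 / (1 + p j)))
    (lam : Fin m → ℝ) (hlam0 : ∀ j, 0 ≤ lam j) (hlamub : ∀ j, lam j ≤ lamS j + r)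
    (x xhat : EuclideanSpace ℝ (Fin n)) :
    1 / (2 * ∑ j, ((1 - p j) / (1 + p j) * ((m : ℝ) / δ)) ^ ((1 - p j) / (1 + p j)) *
        ((lamS j + r) * L j) ^ (2 / (1 + p j))) *
        ‖∑ j, lam j • (g' j x - g' j xhat)‖ ^ 2 - δ / 2
      ≤ ∑ j, lam j * (g j xhat - g j x - ⟪g' j x, xhat - x⟫) := by
  have hm : 0 < m := by
    rcases Nat.eq_zero_or_pos m with h0 | h
    · subst h0
      simp at hpos
    · exact h
  set Lsum : ℝ := ∑ j, ((1 - p j) / (1 + p j) * ((m : ℝ) / δ)) ^ ((1 - p j) / (1 + p j)) *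
      ((lamS j + r) * L j) ^ (2 / (1 + p j)) with hLsum
  set s : EuclideanSpace ℝ (Fin n) := ∑ j, lam j • (g' j x - g' j xhat) with hs
  have hmR : (0:ℝ) < (m:ℝ) := Nat.cast_pos.2 hm
  -- nonnegativity of the Bregman sum
  have hDnn : ∀ j, 0 ≤ g j xhat - g j x - ⟪g' j x, xhat - x⟫ := by
    intro j
    have := stmt5_convex_grad_ineq (hconv j) (fun y => hgrad j y) x xhat
    linarith
  have hDsum_nn : 0 ≤ ∑ j, lam j * (g j xhat - g j x - ⟪g' j x, xhat - x⟫) :=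
    Finset.sum_nonneg fun j _ => mul_nonneg (hlam0 j) (hDnn j)
  rcases eq_or_ne s 0 with hs0 | hsne
  · rw [hs0]
    simp only [norm_zero]
    have h0 : 1 / (2 * Lsum) * (0:ℝ) ^ 2 - δ / 2 = -(δ / 2) := by ring
    rw [h0]
    linarith
  have hsnorm : (0:ℝ) < ‖s‖ := norm_pos_iff.2 hsne
  set t : ℝ := ‖s‖ / Lsum with htdef
  have ht : 0 < t := div_pos hsnorm hpos
  set z : EuclideanSpace ℝ (Fin n) := xhat + (t / ‖s‖) • s with hz
  have hzxhat : z - xhat = (t / ‖s‖) • s := by rw [hz]; abel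
  have hznorm : ‖z - xhat‖ = t := by
    rw [hzxhat, norm_smul, Real.norm_eq_abs, abs_of_pos (div_pos ht hsnorm),
      div_mul_cancel₀ _ hsnorm.ne']
  -- per-component lower bound
  have hcomp : ∀ j, ⟪g' j x - g' j xhat, z - xhat⟫ - L j / (1 + p j) * t ^ (1 + p j)
      ≤ g j xhat - g j x - ⟪g' j x, xhat - x⟫ := by
    intro j
    have hB := stmt5_convex_grad_ineq (hconv j) (fun y => hgrad j y) x z
    have hDesc := stmt5_holder_descent (hp0 j) (fun y => hgrad j y) (hHolder j) xhat z
    rw [hznorm] at hDesc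
    have hsplit : ⟪g' j x, z - x⟫ = ⟪g' j x, z - xhat⟫ + ⟪g' j x, xhat - x⟫ := by
      rw [← inner_add_right]
      congr 1
      abel
    have hsub : ⟪g' j x - g' j xhat, z - xhat⟫
        = ⟪g' j x, z - xhat⟫ - ⟪g' j xhat, z - xhat⟫ := inner_sub_left _ _ _
    linarith
  -- sum them up
  have hsum1 : ∑ j, lam j * (⟪g' j x - g' j xhat, z - xhat⟫ - L j / (1 + p j) * t ^ (1 + p j))
      ≤ ∑ j, lam j * (g j xhat - g j x - ⟪g' j x, xhat - x⟫) :=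
    Finset.sum_le_sum fun j _ => mul_le_mul_of_nonneg_left (hcomp j) (hlam0 j)
  have hinner : ∑ j, lam j * ⟪g' j x - g' j xhat, z - xhat⟫ = t * ‖s‖ := by
    have h1 : ∑ j, lam j * ⟪g' j x - g' j xhat, z - xhat⟫ = ⟪s, z - xhat⟫ := by
      rw [hs, sum_inner]
      exact Finset.sum_congr rfl fun j _ => (real_inner_smul_left _ _ _).symm
    rw [h1, hzxhat, real_inner_smul_right, real_inner_self_eq_norm_sq]
    field_simp
  -- Young bound for each term
  have hyoung : ∑ j, lam j * (L j / (1 + p j) * t ^ (1 + p j))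
      ≤ Lsum / 2 * t ^ 2 + δ / 2 := by
    have hterm : ∀ j : Fin m, lam j * (L j / (1 + p j) * t ^ (1 + p j)) ≤
        ((1 - p j) / (1 + p j) * ((m : ℝ) / δ)) ^ ((1 - p j) / (1 + p j)) *
          ((lamS j + r) * L j) ^ (2 / (1 + p j)) / 2 * t ^ 2 + (δ / m) / 2 := by
      intro j
      have hδ' : (0:ℝ) < δ / m := div_pos hδ hmR
      have hA : 0 ≤ lam j * L j := mul_nonneg (hlam0 j) (hL j)
      have hAA' : lam j * L j ≤ (lamS j + r) * L j :=
        mul_le_mul_of_nonneg_right (hlamub j) (hL j)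
      have := stmt5_young_aux hA hAA' (hp0 j) (hp1 j) hδ' ht.le
      rw [show (1 : ℝ) / (δ / m) = (m : ℝ) / δ by rw [one_div_div]] at this
      calc lam j * (L j / (1 + p j) * t ^ (1 + p j))
          = lam j * L j / (1 + p j) * t ^ (1 + p j) := by ring
        _ ≤ _ := this
    calc ∑ j, lam j * (L j / (1 + p j) * t ^ (1 + p j))
        ≤ ∑ j : Fin m, (((1 - p j) / (1 + p j) * ((m : ℝ) / δ)) ^ ((1 - p j) / (1 + p j)) *
            ((lamS j + r) * L j) ^ (2 / (1 + p j)) / 2 * t ^ 2 + (δ / m) / 2) :=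
          Finset.sum_le_sum fun j _ => hterm j
      _ = Lsum / 2 * t ^ 2 + δ / 2 := by
          rw [Finset.sum_add_distrib, Finset.sum_const, Finset.card_univ, Fintype.card_fin,
            ← Finset.sum_mul, ← Finset.sum_div, ← hLsum]
          congr 1
          field_simp [hmR.ne']
          rw [nsmul_eq_mul]
          field_simp
  -- combine
  have hmain : t * ‖s‖ - (Lsum / 2 * t ^ 2 + δ / 2)
      ≤ ∑ j, lam j * (g j xhat - g j x - ⟪g' j x, xhat - x⟫) := by
    have hexp : ∑ j, lam j * (⟪g' j x - g' j xhat, z - xhat⟫ - L j / (1 + p j) * t ^ (1 + p j))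
        = ∑ j, lam j * ⟪g' j x - g' j xhat, z - xhat⟫
          - ∑ j, lam j * (L j / (1 + p j) * t ^ (1 + p j)) := by
      rw [← Finset.sum_sub_distrib]
      exact Finset.sum_congr rfl fun j _ => by ring
    rw [hexp, hinner] at hsum1
    linarith
  have hfinal : 1 / (2 * Lsum) * ‖s‖ ^ 2 - δ / 2 = t * ‖s‖ - (Lsum / 2 * t ^ 2 + δ / 2) := by
    rw [htdef]
    field_simp
    ring
  rw [hfinal]
  exact hmain
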